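/- Let µ, ν be Borel probability measures on ℝ^d with finite second moments, γ_φ a tangent element at µ and γ_ψ a tangent element at ν. Then the infimum, over all geodesic paths η from µ to ν and all parallel transports Ψ of γ_φ along η, of d_ν((e₁)_#Ψ, γ_ψ)², equals the infimum, over all geodesic paths η' from ν to µ and all parallel transports Ψ' of γ_ψ along η', of d_µ(γ_φ, (e₁)_#Ψ')². -/

import Mathlib

open MeasureTheory
open scoped ENNReal NNReal unitInterval

set_option maxHeartbeats 1000000
set_option synthInstance.maxHeartbeats 1000000

noncomputable section

abbrev Rd (d : ℕ) := EuclideanSpace ℝ (Fin d)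

abbrev Curves (E : Type*) [TopologicalSpace E] := C(unitInterval, E)

instance (E : Type*) [TopologicalSpace E] : MeasurableSpace (Curves E) := borel _
instance (E : Type*) [TopologicalSpace E] : BorelSpace (Curves E) := ⟨rfl⟩

/-- Evaluation at time `t` of a continuous curve. -/
def ev {E : Type*} [TopologicalSpace E] (t : unitInterval) (f : Curves E) : E := f t

/-- First-component curve of a curve in a product space. -/
def p₁ {E F : Type*} [TopologicalSpace E] [TopologicalSpace F] (ψ : Curves (E × F)) : Curves E :=
  ⟨fun t => (ψ t).1, continuous_fst.comp ψ.continuous⟩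

/-- Finite second moment. -/
def FinSM {E : Type*} [MeasurableSpace E] [NormedAddCommGroup E] (μ : Measure E) : Prop :=
  ∫⁻ x, (‖x‖₊ : ℝ≥0∞) ^ 2 ∂μ < ⊤

/-- A tangent element at `μ`. -/
def IsTangent {E : Type*} [MeasurableSpace E] [NormedAddCommGroup E]
    (μ : Measure E) (γ : Measure (E × E)) : Prop :=
  IsProbabilityMeasure γ ∧ γ.map Prod.fst = μ ∧ FinSM (γ.map Prod.snd)

/-- Parallel transport of a tangent element `γ` along a Lagrangian path `η`. -/
def IsParallelTransport {E : Type*} [TopologicalSpace E] [MeasurableSpace E]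
    (γ : Measure (E × E)) (η : Measure (Curves E)) (Ψ : Measure (Curves (E × E))) : Prop :=
  IsProbabilityMeasure Ψ ∧
  (∀ᵐ ψ ∂Ψ, ∀ t : unitInterval, (ψ t).2 = (ψ 0).2) ∧
  Ψ.map p₁ = η ∧
  Ψ.map (ev 0) = γ

/-- Squared 2-Wasserstein distance between measures on `ℝ^d` (Euclidean cost). -/
def W2sq {d : ℕ} (μ ν : Measure (Rd d)) : ℝ≥0∞ :=
  ⨅ (γ : Measure (Rd d × Rd d)) (_ : γ.map Prod.fst = μ) (_ : γ.map Prod.snd = ν),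
    ∫⁻ p, (‖p.1 - p.2‖₊ : ℝ≥0∞) ^ 2 ∂γ

/-- Squared distance `d_µ(γ, γ')²` between two tangent elements over the same base
measure: infimum of `∫ |z - z'|²` over measures on `ℝ^d × ℝ^d × ℝ^d` whose
`(x,z)`-marginal is `γ` and whose `(x,z')`-marginal is `γ'`. -/
def dsq {d : ℕ} (γ γ' : Measure (Rd d × Rd d)) : ℝ≥0∞ :=
  ⨅ (Θ : Measure (Rd d × Rd d × Rd d))
    (_ : Θ.map (fun p => (p.1, p.2.1)) = γ)
    (_ : Θ.map (fun p => (p.1, p.2.2)) = γ'),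
    ∫⁻ p, (‖p.2.1 - p.2.2‖₊ : ℝ≥0∞) ^ 2 ∂Θ

/-- The affine interpolation curve `t ↦ (1-t)x + ty`. -/
def geodCurve {d : ℕ} (x y : Rd d) : Curves (Rd d) :=
  ⟨fun t => (1 - (t : ℝ)) • x + (t : ℝ) • y, by fun_prop⟩

/-- `η` is a geodesic path from `μ` to `ν`: it is the law of `t ↦ (1-t)X + tY`
for `(X, Y)` an optimal coupling for `W₂(μ, ν)`. -/
def IsGeodesicPath {d : ℕ} (μ ν : Measure (Rd d)) (η : Measure (Curves (Rd d))) : Prop :=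
  ∃ g : Measure (Rd d × Rd d),
    g.map Prod.fst = μ ∧ g.map Prod.snd = ν ∧
    (∫⁻ p, (‖p.1 - p.2‖₊ : ℝ≥0∞) ^ 2 ∂g) = W2sq μ ν ∧
    η = g.map (fun p => geodCurve p.1 p.2)

/-! ### Auxiliary material -/

section Aux

lemma measurable_ev {E : Type*} [TopologicalSpace E] [MeasurableSpace E] [BorelSpace E]
    (t : unitInterval) : Measurable (ev (E := E) t) :=
  (continuous_eval_const t).measurable

lemma continuous_p₁' {E F : Type*} [TopologicalSpace E] [TopologicalSpace F] :
    Continuous (p₁ (E := E) (F := F)) := by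
  apply ContinuousMap.continuous_of_continuous_uncurry
  exact continuous_fst.comp (continuous_eval.comp
    (continuous_fst.prodMk continuous_snd))

/-- Time reversal of a curve. -/
def rev {E : Type*} [TopologicalSpace E] (f : Curves E) : Curves E :=
  ⟨fun t => f (unitInterval.symm t), f.continuous.comp unitInterval.continuous_symm⟩

lemma continuous_rev {E : Type*} [TopologicalSpace E] : Continuous (rev (E := E)) := by
  apply ContinuousMap.continuous_of_continuous_uncurry
  exact continuous_eval.comp
    (continuous_fst.prodMk (unitInterval.continuous_symm.comp continuous_snd))

/-- The map building a reversed parallel-transport curve from a transport curve and a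
new (constant) tangent vector. -/
def G {d : ℕ} (p : Curves (Rd d × Rd d) × Rd d) : Curves (Rd d × Rd d) :=
  ⟨fun t => ((p.1 (unitInterval.symm t)).1, p.2),
    ((continuous_fst.comp (p.1.continuous.comp unitInterval.continuous_symm)).prodMk
      continuous_const)⟩

lemma continuous_G {d : ℕ} : Continuous (G (d := d)) := by
  apply ContinuousMap.continuous_of_continuous_uncurry
  refine Continuous.prodMk ?_ (continuous_snd.comp continuous_fst)
  exact continuous_fst.comp (continuous_eval.comp
    (((continuous_fst.comp continuous_fst)).prodMk
      (unitInterval.continuous_symm.comp continuous_snd)))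

lemma measurable_G {d : ℕ} : Measurable (G (d := d)) := continuous_G.measurable

lemma measurable_cost_of {α : Type*} [MeasurableSpace α] {d : ℕ} {f g : α → Rd d}
    (hf : Measurable f) (hg : Measurable g) :
    Measurable fun a => ((‖f a - g a‖₊ : ℝ≥0∞)) ^ 2 :=
  ((hf.sub hg).nnnorm.coe_nnreal_ennreal).pow_const 2

/-- Gluing lemma: pushing a composition-product with a pulled-back kernel forward along the
pullback map yields the composition-product of the pushforward with the kernel. -/
lemma glue_map {α β γ : Type*} [MeasurableSpace α] [MeasurableSpace β] [MeasurableSpace γ]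
    (P : Measure α) [IsProbabilityMeasure P] (κ : ProbabilityTheory.Kernel β γ)
    [ProbabilityTheory.IsMarkovKernel κ]
    {f : α → β} (hf : Measurable f) :
    (P.compProd (κ.comap f hf)).map (Prod.map f id) = (P.map f).compProd κ := by
  have : IsProbabilityMeasure (P.map f) := Measure.isProbabilityMeasure_map hf.aemeasurable
  ext s hs
  rw [Measure.map_apply (hf.prodMap measurable_id) hs,
    Measure.compProd_apply (hs.preimage (hf.prodMap measurable_id)),
    Measure.compProd_apply hs,
    lintegral_map (ProbabilityTheory.Kernel.measurable_kernel_prodMk_left hs) hf]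
  rfl

lemma W2sq_comm_le {d : ℕ} (μ ν : Measure (Rd d)) : W2sq ν μ ≤ W2sq μ ν := by
  refine le_iInf fun g => le_iInf fun h1 => le_iInf fun h2 => ?_
  have hswap : Measurable (Prod.swap : Rd d × Rd d → Rd d × Rd d) := measurable_swap
  refine iInf_le_of_le (g.map Prod.swap) (iInf_le_of_le ?_ (iInf_le_of_le ?_ (le_of_eq ?_)))
  · rw [Measure.map_map measurable_fst hswap]; exact h2
  · rw [Measure.map_map measurable_snd hswap]; exact h1
  · rw [lintegral_map (measurable_cost_of measurable_fst measurable_snd) hswap]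
    simp only [Prod.fst_swap, Prod.snd_swap]
    exact lintegral_congr fun p => by rw [← nnnorm_neg, neg_sub]

lemma W2sq_comm {d : ℕ} (μ ν : Measure (Rd d)) : W2sq μ ν = W2sq ν μ :=
  le_antisymm (W2sq_comm_le ν μ) (W2sq_comm_le μ ν)

lemma dsq_comm_le {d : ℕ} (γ γ' : Measure (Rd d × Rd d)) : dsq γ' γ ≤ dsq γ γ' := by
  refine le_iInf fun Θ => le_iInf fun h1 => le_iInf fun h2 => ?_
  have hm : Measurable (fun p : Rd d × Rd d × Rd d => (p.1, p.2.2, p.2.1)) := by fun_prop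
  refine iInf_le_of_le (Θ.map (fun p => (p.1, p.2.2, p.2.1)))
    (iInf_le_of_le ?_ (iInf_le_of_le ?_ (le_of_eq ?_)))
  · rw [Measure.map_map (by fun_prop) hm]; exact h2
  · rw [Measure.map_map (by fun_prop) hm]; exact h1
  · rw [lintegral_map (show Measurable fun p : Rd d × Rd d × Rd d =>
        ((‖p.2.1 - p.2.2‖₊ : ℝ≥0∞)) ^ 2 from
        measurable_cost_of (by fun_prop) (by fun_prop)) hm]
    exact (lintegral_congr fun p => by rw [← nnnorm_neg, neg_sub]).symm

lemma dsq_comm {d : ℕ} (γ γ' : Measure (Rd d × Rd d)) : dsq γ γ' = dsq γ' γ :=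
  le_antisymm (dsq_comm_le γ' γ) (dsq_comm_le γ γ')

lemma rev_geod {d : ℕ} (x y : Rd d) : rev (geodCurve x y) = geodCurve y x := by
  ext t
  simp only [rev, geodCurve, ContinuousMap.coe_mk, unitInterval.coe_symm_eq]
  rw [show (1 : ℝ) - (1 - (t : ℝ)) = (t : ℝ) from by ring]
  exact add_comm _ _

/-- Main one-sided inequality. -/
lemma main_le {d : ℕ} (μ ν : Measure (Rd d)) (γφ γψ : Measure (Rd d × Rd d))
    (hγψ : IsProbabilityMeasure γψ) :
    (⨅ (η' : Measure (Curves (Rd d))) (_ : IsGeodesicPath ν μ η')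
       (Ψ' : Measure (Curves (Rd d × Rd d))) (_ : IsParallelTransport γψ η' Ψ'),
        dsq γφ (Ψ'.map (ev 1)))
    ≤ (⨅ (η : Measure (Curves (Rd d))) (_ : IsGeodesicPath μ ν η)
       (Ψ : Measure (Curves (Rd d × Rd d))) (_ : IsParallelTransport γφ η Ψ),
        dsq (Ψ.map (ev 1)) γψ) := by
  refine le_iInf fun η => le_iInf fun hη => le_iInf fun Ψ => le_iInf fun hΨ => ?_
  unfold dsq
  refine le_iInf fun Θ => le_iInf fun hΘ1 => le_iInf fun hΘ2 => ?_
  obtain ⟨g, hg1, hg2, hgopt, hgeo⟩ := hη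
  obtain ⟨hΨprob, hΨconst, hΨp1, hΨ0⟩ := hΨ
  haveI := hΨprob
  -- basic measurability facts
  have hev1 : Measurable (ev (E := Rd d × Rd d) (1 : unitInterval)) := measurable_ev 1
  have hev0 : Measurable (ev (E := Rd d × Rd d) (0 : unitInterval)) := measurable_ev 0
  have hp1m : Measurable (p₁ (E := Rd d) (F := Rd d)) := continuous_p₁'.measurable
  have hrevm : Measurable (rev (E := Rd d)) := continuous_rev.measurable
  have hgeodm : Measurable (fun p : Rd d × Rd d => geodCurve p.1 p.2) := by
    refine Continuous.measurable (ContinuousMap.continuous_of_continuous_uncurry _ ?_)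
    show Continuous fun q : (Rd d × Rd d) × unitInterval =>
      (1 - (q.2 : ℝ)) • q.1.1 + (q.2 : ℝ) • q.1.2
    fun_prop
  have hqm : Measurable (fun p : Rd d × Rd d × Rd d => ((p.1, p.2.1), p.2.2)) := by fun_prop
  have hq1 : Measurable (fun q : (Rd d × Rd d) × Rd d => (q.1.1, q.2)) := by fun_prop
  -- Θ is a probability measure
  haveI hΘprob : IsProbabilityMeasure Θ := by
    constructor
    have h := congrArg (fun m : Measure (Rd d × Rd d) => m Set.univ) hΘ2
    simpa only [Measure.map_apply (show Measurable fun p : Rd d × Rd d × Rd d =>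
      (p.1, p.2.2) from by fun_prop) MeasurableSet.univ, Set.preimage_univ,
      measure_univ] using h
  -- the reassociated coupling and the conditional kernel
  set Θ2 : Measure ((Rd d × Rd d) × Rd d) := Θ.map (fun p => ((p.1, p.2.1), p.2.2)) with hΘ2def
  haveI : IsProbabilityMeasure Θ2 := Measure.isProbabilityMeasure_map hqm.aemeasurable
  set κ := Θ2.condKernel with hκdef
  have hfst : Θ2.fst = Ψ.map (ev (1 : unitInterval)) := by
    show Θ2.map Prod.fst = _
    rw [hΘ2def, Measure.map_map measurable_fst hqm]
    exact hΘ1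
  -- the glued measure
  set Λ : Measure (Curves (Rd d × Rd d) × Rd d) :=
    Ψ.compProd (κ.comap (ev (1 : unitInterval)) hev1) with hΛdef
  haveI : IsProbabilityMeasure Λ := by
    constructor
    rw [hΛdef, Measure.compProd_apply_univ, measure_univ]
  have hglue : Λ.map (Prod.map (ev (1 : unitInterval)) id) = Θ2 := by
    rw [hΛdef, glue_map Ψ κ hev1, ← hfst]
    exact Θ2.disintegrate Θ2.condKernel
  have hΛfst : Λ.map Prod.fst = Ψ := Measure.fst_compProd Ψ _
  -- the candidate geodesic path from ν to μ and parallel transport of γψ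
  set η' : Measure (Curves (Rd d)) := η.map rev with hη'def
  set Ψ' : Measure (Curves (Rd d × Rd d)) := Λ.map G with hΨ'def
  -- η' is a geodesic path from ν to μ
  have hη' : IsGeodesicPath ν μ η' := by
    refine ⟨g.map Prod.swap, ?_, ?_, ?_, ?_⟩
    · rw [Measure.map_map measurable_fst measurable_swap]; exact hg2
    · rw [Measure.map_map measurable_snd measurable_swap]; exact hg1
    · rw [lintegral_map (measurable_cost_of measurable_fst measurable_snd) measurable_swap,
        ← W2sq_comm, ← hgopt]
      exact lintegral_congr fun p => by
        simp only [Prod.fst_swap, Prod.snd_swap]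
        rw [← nnnorm_neg, neg_sub]
    · rw [hη'def, hgeo, Measure.map_map hrevm hgeodm, Measure.map_map hgeodm measurable_swap]
      have hfe : (rev ∘ fun p : Rd d × Rd d => geodCurve p.1 p.2) =
          (fun p : Rd d × Rd d => geodCurve p.1 p.2) ∘ Prod.swap :=
        funext fun p => rev_geod p.1 p.2
      rw [hfe]
  -- Ψ' is a parallel transport of γψ along η'
  haveI hΨ'prob : IsProbabilityMeasure Ψ' := Measure.isProbabilityMeasure_map measurable_G.aemeasurable
  have hScl : MeasurableSet {ψ : Curves (Rd d × Rd d) | ∀ t, (ψ t).2 = (ψ 0).2} := by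
    have hset : {ψ : Curves (Rd d × Rd d) | ∀ t, (ψ t).2 = (ψ 0).2} =
        ⋂ t, {ψ : Curves (Rd d × Rd d) | (ψ t).2 = (ψ 0).2} := by ext; simp
    refine IsClosed.measurableSet ?_
    rw [hset]
    exact isClosed_iInter fun t => isClosed_eq
      (continuous_snd.comp (continuous_eval_const t))
      (continuous_snd.comp (continuous_eval_const 0))
  have hΨ'const : ∀ᵐ ψ ∂Ψ', ∀ t : unitInterval, (ψ t).2 = (ψ 0).2 := by
    rw [hΨ'def]
    refine (ae_map_iff measurable_G.aemeasurable hScl).2 (Filter.Eventually.of_forall ?_)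
    intro p t
    rfl
  have hΨ'p1 : Ψ'.map p₁ = η' := by
    have hfun : (p₁ ∘ G (d := d)) = (rev ∘ p₁) ∘ Prod.fst :=
      funext fun p => ContinuousMap.ext fun t => rfl
    calc (Λ.map G).map p₁ = Λ.map (p₁ ∘ G) := Measure.map_map hp1m measurable_G
      _ = Λ.map ((rev ∘ p₁) ∘ Prod.fst) := by rw [hfun]
      _ = (Λ.map Prod.fst).map (rev ∘ p₁) :=
          (Measure.map_map (hrevm.comp hp1m) measurable_fst).symm
      _ = Ψ.map (rev ∘ p₁) := by rw [hΛfst]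
      _ = (Ψ.map p₁).map rev := (Measure.map_map hrevm hp1m).symm
      _ = η.map rev := by rw [hΨp1]
  have hΨ'0 : Ψ'.map (ev 0) = γψ := by
    have hfun0 : (ev (0 : unitInterval)) ∘ G (d := d) =
        (fun q : (Rd d × Rd d) × Rd d => (q.1.1, q.2)) ∘ (Prod.map (ev (1 : unitInterval)) id) := by
      funext p
      show ((p.1 (unitInterval.symm 0)).1, p.2) = ((p.1 1).1, p.2)
      rw [unitInterval.symm_zero]
    calc (Λ.map G).map (ev 0) = Λ.map ((ev (0 : unitInterval)) ∘ G) :=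
          Measure.map_map hev0 measurable_G
      _ = Λ.map ((fun q : (Rd d × Rd d) × Rd d => (q.1.1, q.2)) ∘
            (Prod.map (ev (1 : unitInterval)) id)) := by rw [hfun0]
      _ = (Λ.map (Prod.map (ev (1 : unitInterval)) id)).map
            (fun q : (Rd d × Rd d) × Rd d => (q.1.1, q.2)) :=
          (Measure.map_map hq1 (hev1.prodMap measurable_id)).symm
      _ = Θ2.map (fun q : (Rd d × Rd d) × Rd d => (q.1.1, q.2)) := by rw [hglue]
      _ = Θ.map ((fun q : (Rd d × Rd d) × Rd d => (q.1.1, q.2)) ∘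
            (fun p : Rd d × Rd d × Rd d => ((p.1, p.2.1), p.2.2))) := by
          rw [hΘ2def]; exact Measure.map_map hq1 hqm
      _ = γψ := hΘ2
  have hΨ'pt : IsParallelTransport γψ η' Ψ' := ⟨hΨ'prob, hΨ'const, hΨ'p1, hΨ'0⟩
  -- the coupling witnessing dsq γφ (Ψ'.map (ev 1)) ≤ cost Θ
  have hevcΛ : Measurable fun p : Curves (Rd d × Rd d) × Rd d => p.1 0 :=
    ((continuous_eval_const (0 : unitInterval)).comp continuous_fst).measurable
  have hTm : Measurable (fun p : Curves (Rd d × Rd d) × Rd d =>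
      ((p.1 0).1, ((p.1 0).2, p.2))) :=
    (measurable_fst.comp hevcΛ).prodMk ((measurable_snd.comp hevcΛ).prodMk measurable_snd)
  set Θ' : Measure (Rd d × Rd d × Rd d) :=
    Λ.map (fun p => ((p.1 0).1, ((p.1 0).2, p.2))) with hΘ'def
  have hΘ'1 : Θ'.map (fun p => (p.1, p.2.1)) = γφ := by
    rw [hΘ'def, Measure.map_map (by fun_prop) hTm]
    have : ((fun p : Rd d × Rd d × Rd d => (p.1, p.2.1)) ∘
        (fun p : Curves (Rd d × Rd d) × Rd d => ((p.1 0).1, ((p.1 0).2, p.2)))) =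
        (ev (0 : unitInterval)) ∘ Prod.fst := rfl
    rw [this, ← Measure.map_map hev0 measurable_fst, hΛfst]
    exact hΨ0
  have hΘ'2 : Θ'.map (fun p => (p.1, p.2.2)) = Ψ'.map (ev 1) := by
    rw [hΘ'def, Measure.map_map (by fun_prop) hTm, hΨ'def,
      Measure.map_map (measurable_ev 1) measurable_G]
    have hfun : ((fun p : Rd d × Rd d × Rd d => (p.1, p.2.2)) ∘
        (fun p : Curves (Rd d × Rd d) × Rd d => ((p.1 0).1, ((p.1 0).2, p.2)))) =
        (ev (1 : unitInterval)) ∘ G (d := d) := by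
      funext p
      show ((p.1 0).1, p.2) = ((p.1 (unitInterval.symm 1)).1, p.2)
      rw [unitInterval.symm_one]
    rw [hfun]
  -- a.e. constancy of the second component under Λ
  have hΛae : ∀ᵐ p ∂Λ, ∀ t : unitInterval, ((p.1 : Curves (Rd d × Rd d)) t).2 = (p.1 0).2 := by
    have h0 : Λ (Prod.fst ⁻¹' {ψ : Curves (Rd d × Rd d) | ∀ t, (ψ t).2 = (ψ 0).2}ᶜ) = 0 := by
      rw [← Measure.map_apply measurable_fst hScl.compl, hΛfst]
      exact ae_iff.1 hΨconst
    rw [ae_iff]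
    exact h0
  -- cost identity
  have hcost : (∫⁻ p, (‖p.2.1 - p.2.2‖₊ : ℝ≥0∞) ^ 2 ∂Θ') =
      ∫⁻ p, (‖p.2.1 - p.2.2‖₊ : ℝ≥0∞) ^ 2 ∂Θ := by
    have hintm : Measurable fun p : Rd d × Rd d × Rd d => (‖p.2.1 - p.2.2‖₊ : ℝ≥0∞) ^ 2 :=
      measurable_cost_of (by fun_prop) (by fun_prop)
    have hintm2 : Measurable fun q : (Rd d × Rd d) × Rd d => (‖q.1.2 - q.2‖₊ : ℝ≥0∞) ^ 2 :=
      measurable_cost_of (by fun_prop) (by fun_prop)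
    rw [hΘ'def, lintegral_map hintm hTm]
    have e1 : (∫⁻ p, (‖((p.1 : Curves (Rd d × Rd d)) 0).2 - p.2‖₊ : ℝ≥0∞) ^ 2 ∂Λ) =
        ∫⁻ p, (‖((p.1 : Curves (Rd d × Rd d)) 1).2 - p.2‖₊ : ℝ≥0∞) ^ 2 ∂Λ :=
      lintegral_congr_ae (hΛae.mono fun p hp => by
        show (‖((p.1 : Curves (Rd d × Rd d)) 0).2 - p.2‖₊ : ℝ≥0∞) ^ 2 =
          (‖((p.1 : Curves (Rd d × Rd d)) 1).2 - p.2‖₊ : ℝ≥0∞) ^ 2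
        rw [hp 1])
    have e2 : (∫⁻ p, (‖((p.1 : Curves (Rd d × Rd d)) 1).2 - p.2‖₊ : ℝ≥0∞) ^ 2 ∂Λ) =
        ∫⁻ q, (‖q.1.2 - q.2‖₊ : ℝ≥0∞) ^ 2 ∂Θ2 := by
      rw [← hglue, lintegral_map hintm2 (hev1.prodMap measurable_id)]
      rfl
    have e3 : (∫⁻ q, (‖q.1.2 - q.2‖₊ : ℝ≥0∞) ^ 2 ∂Θ2) =
        ∫⁻ p, (‖p.2.1 - p.2.2‖₊ : ℝ≥0∞) ^ 2 ∂Θ := by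
      rw [hΘ2def, lintegral_map hintm2 hqm]
    rw [e1, e2, e3]
  refine iInf_le_of_le η' (iInf_le_of_le hη' (iInf_le_of_le Ψ' (iInf_le_of_le hΨ'pt ?_)))
  exact iInf_le_of_le Θ' (iInf_le_of_le hΘ'1 (iInf_le_of_le hΘ'2 (le_of_eq hcost)))

end Aux

theorem stmt9 {d : ℕ} (μ ν : Measure (Rd d))
    [IsProbabilityMeasure μ] [IsProbabilityMeasure ν] (hμ : FinSM μ) (hν : FinSM ν)
    (γφ γψ : Measure (Rd d × Rd d)) (hφ : IsTangent μ γφ) (hψ : IsTangent ν γψ) :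
    (⨅ (η : Measure (Curves (Rd d))) (_ : IsGeodesicPath μ ν η)
       (Ψ : Measure (Curves (Rd d × Rd d))) (_ : IsParallelTransport γφ η Ψ),
        dsq (Ψ.map (ev 1)) γψ)
    =
    (⨅ (η' : Measure (Curves (Rd d))) (_ : IsGeodesicPath ν μ η')
       (Ψ' : Measure (Curves (Rd d × Rd d))) (_ : IsParallelTransport γψ η' Ψ'),
        dsq γφ (Ψ'.map (ev 1))) := by
  refine le_antisymm ?_ (main_le μ ν γφ γψ hψ.1)
  have h2 := main_le ν μ γψ γφ hφ.1
  calc (⨅ (η : Measure (Curves (Rd d))) (_ : IsGeodesicPath μ ν η)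
       (Ψ : Measure (Curves (Rd d × Rd d))) (_ : IsParallelTransport γφ η Ψ),
        dsq (Ψ.map (ev 1)) γψ)
      = (⨅ (η : Measure (Curves (Rd d))) (_ : IsGeodesicPath μ ν η)
       (Ψ : Measure (Curves (Rd d × Rd d))) (_ : IsParallelTransport γφ η Ψ),
        dsq γψ (Ψ.map (ev 1))) :=
        iInf_congr fun η => iInf_congr fun _ => iInf_congr fun Ψ => iInf_congr fun _ =>
          dsq_comm _ _
    _ ≤ (⨅ (η' : Measure (Curves (Rd d))) (_ : IsGeodesicPath ν μ η')
       (Ψ' : Measure (Curves (Rd d × Rd d))) (_ : IsParallelTransport γψ η' Ψ'),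
        dsq (Ψ'.map (ev 1)) γφ) := h2
    _ = (⨅ (η' : Measure (Curves (Rd d))) (_ : IsGeodesicPath ν μ η')
       (Ψ' : Measure (Curves (Rd d × Rd d))) (_ : IsParallelTransport γψ η' Ψ'),
        dsq γφ (Ψ'.map (ev 1))) :=
        iInf_congr fun η' => iInf_congr fun _ => iInf_congr fun Ψ' => iInf_congr fun _ =>
          dsq_comm _ _

end
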